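/- Let I₃ ⊂ ℂ[σ,τ,ρ] be the ideal generated by the ten polynomials: σ³−2σ²+σ−τ²+τρ+τ−ρ²+ρ−1; (τ−1)(τ²−σ); (ρ−1)(ρ²−σ); (τ−1)(σ²−τ); (ρ−1)(σ²−ρ); σ²−στ−σρ+τ²ρ−τρ+ρ²−ρ+1; σ²−στ−σρ+τ²+τρ²−τρ−τ+1; (τ−1)(στ−1); (ρ−1)(σρ−1); and −σ²+στρ+σ−τ²+τρ−ρ². Let A = ℂ[σ,τ,ρ]/I₃. Then the ideal m of A generated by σ−1, τ−1 and ρ−1 is maximal, and the localization A_m is isomorphic as a ℂ-algebra to ℂ[u,v,w]/⟨u,v,w⟩². In particular A_m is a 4-dimensional local ℂ-algebra whose maximal ideal squares to zero. -/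

import Mathlib

set_option synthInstance.maxHeartbeats 1000000
set_option maxHeartbeats 1000000

/-!
STATEMENT 19: Let `A = ℂ[σ,τ,ρ]/I₃`, where `I₃` is generated by the ten
listed polynomials.  The ideal `m = ⟨σ-1, τ-1, ρ-1⟩` of `A` is maximal, and
the localization `A_m` is isomorphic as a ℂ-algebra to `ℂ[u,v,w]/⟨u,v,w⟩²`.
In particular `A_m` is a 4-dimensional local ℂ-algebra whose maximal ideal
squares to zero.
-/

open MvPolynomial

/-- The defining ideal `I₃ ⊆ ℂ[σ,τ,ρ]` of the virtual K-theory of `ℙ(1,3)`,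
with `σ = X 0`, `τ = X 1`, `ρ = X 2`. -/
noncomputable def virtIdeal3 : Ideal (MvPolynomial (Fin 3) ℂ) :=
  Ideal.span
    {(X 0) ^ 3 - 2 * (X 0) ^ 2 + X 0 - (X 1) ^ 2 + X 1 * X 2 + X 1 - (X 2) ^ 2 + X 2 - 1,
     (X 1 - 1) * ((X 1) ^ 2 - X 0),
     (X 2 - 1) * ((X 2) ^ 2 - X 0),
     (X 1 - 1) * ((X 0) ^ 2 - X 1),
     (X 2 - 1) * ((X 0) ^ 2 - X 2),
     (X 0) ^ 2 - X 0 * X 1 - X 0 * X 2 + (X 1) ^ 2 * X 2 - X 1 * X 2 + (X 2) ^ 2 - X 2 + 1,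
     (X 0) ^ 2 - X 0 * X 1 - X 0 * X 2 + (X 1) ^ 2 + X 1 * (X 2) ^ 2 - X 1 * X 2 - X 1 + 1,
     (X 1 - 1) * (X 0 * X 1 - 1),
     (X 2 - 1) * (X 0 * X 2 - 1),
     -(X 0) ^ 2 + X 0 * X 1 * X 2 + X 0 - (X 1) ^ 2 + X 1 * X 2 - (X 2) ^ 2}

/-- `A = ℂ[σ,τ,ρ]/I₃`. -/
abbrev VirtK3 : Type := MvPolynomial (Fin 3) ℂ ⧸ virtIdeal3

/-- The augmentation ideal `m = ⟨σ - 1, τ - 1, ρ - 1⟩` of `A`. -/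
noncomputable def augIdeal3 : Ideal VirtK3 :=
  Ideal.span
    {Ideal.Quotient.mk virtIdeal3 (X 0) - 1,
     Ideal.Quotient.mk virtIdeal3 (X 1) - 1,
     Ideal.Quotient.mk virtIdeal3 (X 2) - 1}

/-- `ℂ[u,v,w]/⟨u,v,w⟩²`, the K-theory of the crepant resolution `Z₃`. -/
abbrev SquareZeroThreeVars : Type :=
  MvPolynomial (Fin 3) ℂ ⧸ ((Ideal.span {(X 0 : MvPolynomial (Fin 3) ℂ), X 1, X 2}) ^ 2)

noncomputable def G0 : MvPolynomial (Fin 3) ℂ := (X 0) ^ 3 - 2 * (X 0) ^ 2 + X 0 - (X 1) ^ 2 + X 1 * X 2 + X 1 - (X 2) ^ 2 + X 2 - 1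
noncomputable def G1 : MvPolynomial (Fin 3) ℂ := (X 1 - 1) * ((X 1) ^ 2 - X 0)
noncomputable def G2 : MvPolynomial (Fin 3) ℂ := (X 2 - 1) * ((X 2) ^ 2 - X 0)
noncomputable def G3 : MvPolynomial (Fin 3) ℂ := (X 1 - 1) * ((X 0) ^ 2 - X 1)
noncomputable def G4 : MvPolynomial (Fin 3) ℂ := (X 2 - 1) * ((X 0) ^ 2 - X 2)
noncomputable def G5 : MvPolynomial (Fin 3) ℂ := (X 0) ^ 2 - X 0 * X 1 - X 0 * X 2 + (X 1) ^ 2 * X 2 - X 1 * X 2 + (X 2) ^ 2 - X 2 + 1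
noncomputable def G6 : MvPolynomial (Fin 3) ℂ := (X 0) ^ 2 - X 0 * X 1 - X 0 * X 2 + (X 1) ^ 2 + X 1 * (X 2) ^ 2 - X 1 * X 2 - X 1 + 1
noncomputable def G7 : MvPolynomial (Fin 3) ℂ := (X 1 - 1) * (X 0 * X 1 - 1)
noncomputable def G8 : MvPolynomial (Fin 3) ℂ := (X 2 - 1) * (X 0 * X 2 - 1)
noncomputable def G9 : MvPolynomial (Fin 3) ℂ := -(X 0) ^ 2 + X 0 * X 1 * X 2 + X 0 - (X 1) ^ 2 + X 1 * X 2 - (X 2) ^ 2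

lemma virtIdeal3_eq : virtIdeal3 = Ideal.span {G0,G1,G2,G3,G4,G5,G6,G7,G8,G9} := rfl

lemma hG0 : G0 ∈ virtIdeal3 := by
  rw [virtIdeal3_eq]; exact Ideal.subset_span (Set.mem_insert _ _)
lemma hG1 : G1 ∈ virtIdeal3 := by
  rw [virtIdeal3_eq]; exact Ideal.subset_span (Set.mem_insert_of_mem _ (Set.mem_insert _ _))
lemma hG2 : G2 ∈ virtIdeal3 := by
  rw [virtIdeal3_eq]; exact Ideal.subset_span (Set.mem_insert_of_mem _ (Set.mem_insert_of_mem _ (Set.mem_insert _ _)))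
lemma hG3 : G3 ∈ virtIdeal3 := by
  rw [virtIdeal3_eq]; exact Ideal.subset_span (Set.mem_insert_of_mem _ (Set.mem_insert_of_mem _ (Set.mem_insert_of_mem _ (Set.mem_insert _ _))))
lemma hG4 : G4 ∈ virtIdeal3 := by
  rw [virtIdeal3_eq]; exact Ideal.subset_span (Set.mem_insert_of_mem _ (Set.mem_insert_of_mem _ (Set.mem_insert_of_mem _ (Set.mem_insert_of_mem _ (Set.mem_insert _ _)))))
lemma hG5 : G5 ∈ virtIdeal3 := by
  rw [virtIdeal3_eq]; exact Ideal.subset_span (Set.mem_insert_of_mem _ (Set.mem_insert_of_mem _ (Set.mem_insert_of_mem _ (Set.mem_insert_of_mem _ (Set.mem_insert_of_mem _ (Set.mem_insert _ _))))))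
lemma hG6 : G6 ∈ virtIdeal3 := by
  rw [virtIdeal3_eq]; exact Ideal.subset_span (Set.mem_insert_of_mem _ (Set.mem_insert_of_mem _ (Set.mem_insert_of_mem _ (Set.mem_insert_of_mem _ (Set.mem_insert_of_mem _ (Set.mem_insert_of_mem _ (Set.mem_insert _ _)))))))
lemma hG7 : G7 ∈ virtIdeal3 := by
  rw [virtIdeal3_eq]; exact Ideal.subset_span (Set.mem_insert_of_mem _ (Set.mem_insert_of_mem _ (Set.mem_insert_of_mem _ (Set.mem_insert_of_mem _ (Set.mem_insert_of_mem _ (Set.mem_insert_of_mem _ (Set.mem_insert_of_mem _ (Set.mem_insert _ _))))))))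
lemma hG8 : G8 ∈ virtIdeal3 := by
  rw [virtIdeal3_eq]; exact Ideal.subset_span (Set.mem_insert_of_mem _ (Set.mem_insert_of_mem _ (Set.mem_insert_of_mem _ (Set.mem_insert_of_mem _ (Set.mem_insert_of_mem _ (Set.mem_insert_of_mem _ (Set.mem_insert_of_mem _ (Set.mem_insert_of_mem _ (Set.mem_insert _ _)))))))))
lemma hG9 : G9 ∈ virtIdeal3 := by
  rw [virtIdeal3_eq]; exact Ideal.subset_span (Set.mem_insert_of_mem _ (Set.mem_insert_of_mem _ (Set.mem_insert_of_mem _ (Set.mem_insert_of_mem _ (Set.mem_insert_of_mem _ (Set.mem_insert_of_mem _ (Set.mem_insert_of_mem _ (Set.mem_insert_of_mem _ (Set.mem_insert_of_mem _ (Set.mem_singleton _))))))))))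



noncomputable def Mid : Ideal (MvPolynomial (Fin 3) ℂ) :=
  Ideal.span {X 0 - 1, X 1 - 1, X 2 - 1}

noncomputable def Fpol : MvPolynomial (Fin 3) ℂ := (X 0) ^ 2 + X 0 + 1

lemma hXm : ∀ i : Fin 3, (X i - 1 : MvPolynomial (Fin 3) ℂ) ∈ Mid := by
  intro i
  fin_cases i
  · exact Ideal.subset_span (Set.mem_insert _ _)
  · exact Ideal.subset_span (Set.mem_insert_of_mem _ (Set.mem_insert _ _))
  · exact Ideal.subset_span (Set.mem_insert_of_mem _ (Set.mem_insert_of_mem _ (Set.mem_singleton _)))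

lemma prod_mem_sq {a b : MvPolynomial (Fin 3) ℂ} (ha : a ∈ Mid) (hb : b ∈ Mid) :
    a * b ∈ Mid ^ 2 := by
  rw [pow_two]; exact Ideal.mul_mem_mul ha hb

lemma hQ (i j : Fin 3) : ((X i - 1) * (X j - 1) : MvPolynomial (Fin 3) ℂ) ∈ Mid ^ 2 :=
  prod_mem_sq (hXm i) (hXm j)

lemma I3_le_M2 : virtIdeal3 ≤ Mid ^ 2 := by
  rw [virtIdeal3_eq]
  refine Ideal.span_le.mpr ?_
  rintro x hx
  simp only [Set.mem_insert_iff, Set.mem_singleton_iff] at hx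
  rcases hx with rfl | rfl | rfl | rfl | rfl | rfl | rfl | rfl | rfl | rfl
  · have h : G0 = X 0 * ((X 0 - 1) * (X 0 - 1)) + (-1) * ((X 1 - 1) * (X 1 - 1))
        + 1 * ((X 1 - 1) * (X 2 - 1)) + (-1) * ((X 2 - 1) * (X 2 - 1)) := by
      simp only [G0]; ring
    rw [h]
    exact add_mem (add_mem (add_mem (Ideal.mul_mem_left _ _ (hQ 0 0)) (Ideal.mul_mem_left _ _ (hQ 1 1))) (Ideal.mul_mem_left _ _ (hQ 1 2))) (Ideal.mul_mem_left _ _ (hQ 2 2))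
  · have h : G1 = (-1) * ((X 0 - 1) * (X 1 - 1)) + (X 1 + 1) * ((X 1 - 1) * (X 1 - 1)) := by
      simp only [G1]; ring
    rw [h]
    exact add_mem (Ideal.mul_mem_left _ _ (hQ 0 1)) (Ideal.mul_mem_left _ _ (hQ 1 1))
  · have h : G2 = (-1) * ((X 0 - 1) * (X 2 - 1)) + (X 2 + 1) * ((X 2 - 1) * (X 2 - 1)) := by
      simp only [G2]; ring
    rw [h]
    exact add_mem (Ideal.mul_mem_left _ _ (hQ 0 2)) (Ideal.mul_mem_left _ _ (hQ 2 2))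
  · have h : G3 = (X 1 - 1) * ((X 0 - 1) * (X 0 - 1)) + 2 * ((X 0 - 1) * (X 1 - 1))
        + (-1) * ((X 1 - 1) * (X 1 - 1)) := by
      simp only [G3]; ring
    rw [h]
    exact add_mem (add_mem (Ideal.mul_mem_left _ _ (hQ 0 0)) (Ideal.mul_mem_left _ _ (hQ 0 1))) (Ideal.mul_mem_left _ _ (hQ 1 1))
  · have h : G4 = (X 2 - 1) * ((X 0 - 1) * (X 0 - 1)) + 2 * ((X 0 - 1) * (X 2 - 1))
        + (-1) * ((X 2 - 1) * (X 2 - 1)) := by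
      simp only [G4]; ring
    rw [h]
    exact add_mem (add_mem (Ideal.mul_mem_left _ _ (hQ 0 0)) (Ideal.mul_mem_left _ _ (hQ 0 2))) (Ideal.mul_mem_left _ _ (hQ 2 2))
  · have h : G5 = 1 * ((X 0 - 1) * (X 0 - 1)) + (-1) * ((X 0 - 1) * (X 1 - 1))
        + (-1) * ((X 0 - 1) * (X 2 - 1)) + X 2 * ((X 1 - 1) * (X 1 - 1))
        + 1 * ((X 1 - 1) * (X 2 - 1)) + 1 * ((X 2 - 1) * (X 2 - 1)) := by
      simp only [G5]; ring
    rw [h]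
    exact add_mem (add_mem (add_mem (add_mem (add_mem (Ideal.mul_mem_left _ _ (hQ 0 0)) (Ideal.mul_mem_left _ _ (hQ 0 1))) (Ideal.mul_mem_left _ _ (hQ 0 2))) (Ideal.mul_mem_left _ _ (hQ 1 1))) (Ideal.mul_mem_left _ _ (hQ 1 2))) (Ideal.mul_mem_left _ _ (hQ 2 2))
  · have h : G6 = 1 * ((X 0 - 1) * (X 0 - 1)) + (-1) * ((X 0 - 1) * (X 1 - 1))
        + (-1) * ((X 0 - 1) * (X 2 - 1)) + 1 * ((X 1 - 1) * (X 1 - 1))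
        + X 2 * ((X 1 - 1) * (X 2 - 1)) + 1 * ((X 2 - 1) * (X 2 - 1)) := by
      simp only [G6]; ring
    rw [h]
    exact add_mem (add_mem (add_mem (add_mem (add_mem (Ideal.mul_mem_left _ _ (hQ 0 0)) (Ideal.mul_mem_left _ _ (hQ 0 1))) (Ideal.mul_mem_left _ _ (hQ 0 2))) (Ideal.mul_mem_left _ _ (hQ 1 1))) (Ideal.mul_mem_left _ _ (hQ 1 2))) (Ideal.mul_mem_left _ _ (hQ 2 2))
  · have h : G7 = X 1 * ((X 0 - 1) * (X 1 - 1)) + 1 * ((X 1 - 1) * (X 1 - 1)) := by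
      simp only [G7]; ring
    rw [h]
    exact add_mem (Ideal.mul_mem_left _ _ (hQ 0 1)) (Ideal.mul_mem_left _ _ (hQ 1 1))
  · have h : G8 = X 2 * ((X 0 - 1) * (X 2 - 1)) + 1 * ((X 2 - 1) * (X 2 - 1)) := by
      simp only [G8]; ring
    rw [h]
    exact add_mem (Ideal.mul_mem_left _ _ (hQ 0 2)) (Ideal.mul_mem_left _ _ (hQ 2 2))
  · have h : G9 = (-1) * ((X 0 - 1) * (X 0 - 1)) + X 2 * ((X 0 - 1) * (X 1 - 1))
        + 1 * ((X 0 - 1) * (X 2 - 1)) + (-1) * ((X 1 - 1) * (X 1 - 1))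
        + 2 * ((X 1 - 1) * (X 2 - 1)) + (-1) * ((X 2 - 1) * (X 2 - 1)) := by
      simp only [G9]; ring
    rw [h]
    exact add_mem (add_mem (add_mem (add_mem (add_mem (Ideal.mul_mem_left _ _ (hQ 0 0)) (Ideal.mul_mem_left _ _ (hQ 0 1))) (Ideal.mul_mem_left _ _ (hQ 0 2))) (Ideal.mul_mem_left _ _ (hQ 1 1))) (Ideal.mul_mem_left _ _ (hQ 1 2))) (Ideal.mul_mem_left _ _ (hQ 2 2))

lemma hF00 : Fpol * ((X 0 - 1) * ((X 0 : MvPolynomial (Fin 3) ℂ) - 1)) ∈ virtIdeal3 := by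
  have h : Fpol * ((X 0 - 1) * ((X 0 : MvPolynomial (Fin 3) ℂ) - 1))
      = (X 0 + 1) * G0 + 1 * G7 + 1 * G8 + (-1) * G9 := by
    simp only [Fpol, G0, G7, G8, G9]; ring
  rw [h]
  exact add_mem (add_mem (add_mem (Ideal.mul_mem_left _ _ hG0) (Ideal.mul_mem_left _ _ hG7)) (Ideal.mul_mem_left _ _ hG8)) (Ideal.mul_mem_left _ _ hG9)

lemma hF01 : Fpol * ((X 0 - 1) * ((X 1 : MvPolynomial (Fin 3) ℂ) - 1)) ∈ virtIdeal3 := by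
  have h : Fpol * ((X 0 - 1) * ((X 1 : MvPolynomial (Fin 3) ℂ) - 1))
      = (X 1 - 1) * G0 + 1 * G1 + 2 * G3 + (-1) * G5 + 1 * G6 := by
    simp only [Fpol, G0, G1, G3, G5, G6]; ring
  rw [h]
  exact add_mem (add_mem (add_mem (add_mem (Ideal.mul_mem_left _ _ hG0) (Ideal.mul_mem_left _ _ hG1)) (Ideal.mul_mem_left _ _ hG3)) (Ideal.mul_mem_left _ _ hG5)) (Ideal.mul_mem_left _ _ hG6)

lemma hF02 : Fpol * ((X 0 - 1) * ((X 2 : MvPolynomial (Fin 3) ℂ) - 1)) ∈ virtIdeal3 := by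
  have h : Fpol * ((X 0 - 1) * ((X 2 : MvPolynomial (Fin 3) ℂ) - 1))
      = (X 2 - 1) * G0 + 1 * G2 + 2 * G4 + 1 * G5 + (-1) * G6 := by
    simp only [Fpol, G0, G2, G4, G5, G6]; ring
  rw [h]
  exact add_mem (add_mem (add_mem (add_mem (Ideal.mul_mem_left _ _ hG0) (Ideal.mul_mem_left _ _ hG2)) (Ideal.mul_mem_left _ _ hG4)) (Ideal.mul_mem_left _ _ hG5)) (Ideal.mul_mem_left _ _ hG6)

lemma hF11 : Fpol * ((X 1 - 1) * ((X 1 : MvPolynomial (Fin 3) ℂ) - 1)) ∈ virtIdeal3 := by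
  have h : Fpol * ((X 1 - 1) * ((X 1 : MvPolynomial (Fin 3) ℂ) - 1))
      = 1 * G1 + (X 1 - 1) * G3 + 1 * G7 := by
    simp only [Fpol, G1, G3, G7]; ring
  rw [h]
  exact add_mem (add_mem (Ideal.mul_mem_left _ _ hG1) (Ideal.mul_mem_left _ _ hG3)) (Ideal.mul_mem_left _ _ hG7)

lemma hF12 : Fpol * ((X 1 - 1) * ((X 2 : MvPolynomial (Fin 3) ℂ) - 1)) ∈ virtIdeal3 := by
  have h : Fpol * ((X 1 - 1) * ((X 2 : MvPolynomial (Fin 3) ℂ) - 1))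
      = (X 2 - 1) * G3 + 1 * G5 + 1 * G9 := by
    simp only [Fpol, G3, G5, G9]; ring
  rw [h]
  exact add_mem (add_mem (Ideal.mul_mem_left _ _ hG3) (Ideal.mul_mem_left _ _ hG5)) (Ideal.mul_mem_left _ _ hG9)

lemma hF22 : Fpol * ((X 2 - 1) * ((X 2 : MvPolynomial (Fin 3) ℂ) - 1)) ∈ virtIdeal3 := by
  have h : Fpol * ((X 2 - 1) * ((X 2 : MvPolynomial (Fin 3) ℂ) - 1))
      = 1 * G2 + (X 2 - 1) * G4 + 1 * G8 := by
    simp only [Fpol, G2, G4, G8]; ring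
  rw [h]
  exact add_mem (add_mem (Ideal.mul_mem_left _ _ hG2) (Ideal.mul_mem_left _ _ hG4)) (Ideal.mul_mem_left _ _ hG8)

lemma key_f : ∀ p ∈ (Mid ^ 2 : Ideal (MvPolynomial (Fin 3) ℂ)), Fpol * p ∈ virtIdeal3 := by
  have hle : Mid ^ 2 ≤ Submodule.comap (LinearMap.mulLeft (MvPolynomial (Fin 3) ℂ) Fpol)
      (virtIdeal3 : Submodule (MvPolynomial (Fin 3) ℂ) (MvPolynomial (Fin 3) ℂ)) := by
    rw [pow_two, Mid, Ideal.span_mul_span']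
    refine Ideal.span_le.mpr ?_
    rintro x ⟨a, ha, b, hb, rfl⟩
    simp only [Set.mem_insert_iff, Set.mem_singleton_iff] at ha hb
    have swap01 : ((X 1 - 1) * (X 0 - 1) : MvPolynomial (Fin 3) ℂ) = (X 0 - 1) * (X 1 - 1) := by ring
    have swap02 : ((X 2 - 1) * (X 0 - 1) : MvPolynomial (Fin 3) ℂ) = (X 0 - 1) * (X 2 - 1) := by ring
    have swap12 : ((X 2 - 1) * (X 1 - 1) : MvPolynomial (Fin 3) ℂ) = (X 1 - 1) * (X 2 - 1) := by ring
    rcases ha with rfl | rfl | rfl <;> rcases hb with rfl | rfl | rfl <;>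
      refine Submodule.mem_comap.mpr ?_ <;> rw [LinearMap.mulLeft_apply]
    · exact hF00
    · exact hF01
    · exact hF02
    · exact (show Fpol * ((X 1 - 1) * ((X 0 : MvPolynomial (Fin 3) ℂ) - 1)) ∈ virtIdeal3 by
        rw [swap01]; exact hF01)
    · exact hF11
    · exact hF12
    · exact (show Fpol * ((X 2 - 1) * ((X 0 : MvPolynomial (Fin 3) ℂ) - 1)) ∈ virtIdeal3 by
        rw [swap02]; exact hF02)
    · exact (show Fpol * ((X 2 - 1) * ((X 1 : MvPolynomial (Fin 3) ℂ) - 1)) ∈ virtIdeal3 by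
        rw [swap12]; exact hF12)
    · exact hF22
  intro p hp
  simpa using hle hp

/-- The evaluation point `(1,1,1)`. -/
noncomputable def ev1 : MvPolynomial (Fin 3) ℂ →+* ℂ := MvPolynomial.eval (fun _ => (1 : ℂ))

lemma taylor1 (p : MvPolynomial (Fin 3) ℂ) : p - C (ev1 p) ∈ Mid := by
  induction p using MvPolynomial.induction_on with
  | C a => simp only [ev1, eval_C, sub_self]; exact zero_mem _
  | add p q hp hq =>
      have h : p + q - C (ev1 (p + q)) = (p - C (ev1 p)) + (q - C (ev1 q)) := by
        simp only [ev1, map_add]; ring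
      rw [h]; exact add_mem hp hq
  | mul_X p i hp =>
      have h : p * X i - C (ev1 (p * X i)) = p * (X i - 1) + (p - C (ev1 p)) := by
        simp only [ev1, map_mul, eval_X, map_one, C_1]
        ring
      rw [h]
      exact add_mem (Ideal.mul_mem_left _ _ (hXm i)) hp

lemma Mid_eq_ker : Mid = RingHom.ker ev1 := by
  refine le_antisymm ?_ ?_
  · rw [Mid]
    refine Ideal.span_le.mpr ?_
    rintro x hx
    simp only [Set.mem_insert_iff, Set.mem_singleton_iff] at hx
    rcases hx with rfl | rfl | rfl <;>
      · simp [RingHom.mem_ker, ev1]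
  · intro p hp
    rw [RingHom.mem_ker] at hp
    have h := taylor1 p
    rwa [hp, map_zero, sub_zero] at h

lemma I3_le_Mid : virtIdeal3 ≤ Mid :=
  I3_le_M2.trans (Ideal.pow_le_self two_ne_zero)

lemma augIdeal3_eq_map : augIdeal3 = Ideal.map (Ideal.Quotient.mk virtIdeal3) Mid := by
  rw [augIdeal3, Mid, Ideal.map_span, Set.image_insert_eq, Set.image_insert_eq,
    Set.image_singleton, map_sub, map_sub, map_sub, map_one]

lemma mem_aug_iff (p : MvPolynomial (Fin 3) ℂ) :
    Ideal.Quotient.mk virtIdeal3 p ∈ augIdeal3 ↔ p ∈ Mid := by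
  rw [augIdeal3_eq_map, Ideal.mem_quotient_iff_mem_sup, sup_eq_left.mpr I3_le_Mid]

lemma ev1_Fpol : ev1 Fpol = 3 := by
  simp [ev1, Fpol]
  norm_num

/-- Units in `R/Mid²`. -/
lemma isUnit_mkM2 (p : MvPolynomial (Fin 3) ℂ) (hp : ev1 p ≠ 0) :
    IsUnit (Ideal.Quotient.mk (Mid ^ 2) p) := by
  set c : ℂ := ev1 p with hc
  refine isUnit_iff_exists_inv.mpr
    ⟨Ideal.Quotient.mk (Mid ^ 2) (C c⁻¹ - C (c⁻¹ * c⁻¹) * (p - C c)), ?_⟩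
  rw [← map_mul, ← map_one (Ideal.Quotient.mk (Mid ^ 2)), Ideal.Quotient.eq]
  have hcc : (C c : MvPolynomial (Fin 3) ℂ) * C c⁻¹ = 1 := by
    rw [← C_mul, mul_inv_cancel₀ hp, C_1]
  have h : p * (C c⁻¹ - C (c⁻¹ * c⁻¹) * (p - C c)) - 1
      = (-(C c⁻¹ * C c⁻¹)) * ((p - C c) * (p - C c)) := by
    rw [C_mul]
    linear_combination (1 + C c * C c⁻¹ - p * C c⁻¹) * hcc
  rw [h]
  exact Ideal.mul_mem_left _ _ (prod_mem_sq (taylor1 p) (taylor1 p))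

/-- The shift automorphism `Xᵢ ↦ Xᵢ - 1`. -/
noncomputable def eShift : MvPolynomial (Fin 3) ℂ ≃ₐ[ℂ] MvPolynomial (Fin 3) ℂ :=
  AlgEquiv.ofAlgHom (aeval fun i => X i - 1) (aeval fun i => X i + 1)
    (by refine MvPolynomial.algHom_ext fun i => ?_; simp)
    (by refine MvPolynomial.algHom_ext fun i => ?_; simp)

lemma eShift_X (i : Fin 3) : eShift (X i) = X i - 1 := by
  simp [eShift]

lemma map_eShift_sq : Mid ^ 2
    = Ideal.map (eShift : MvPolynomial (Fin 3) ℂ →+* MvPolynomial (Fin 3) ℂ)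
        ((Ideal.span {(X 0 : MvPolynomial (Fin 3) ℂ), X 1, X 2}) ^ 2) := by
  have h1 : Mid = Ideal.map (eShift : MvPolynomial (Fin 3) ℂ →+* MvPolynomial (Fin 3) ℂ)
      (Ideal.span {(X 0 : MvPolynomial (Fin 3) ℂ), X 1, X 2}) := by
    rw [Ideal.map_span, Set.image_insert_eq, Set.image_insert_eq, Set.image_singleton, Mid]
    have e0 : (eShift : MvPolynomial (Fin 3) ℂ →+* MvPolynomial (Fin 3) ℂ) (X 0) = X 0 - 1 :=
      eShift_X 0
    have e1 : (eShift : MvPolynomial (Fin 3) ℂ →+* MvPolynomial (Fin 3) ℂ) (X 1) = X 1 - 1 :=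
      eShift_X 1
    have e2 : (eShift : MvPolynomial (Fin 3) ℂ →+* MvPolynomial (Fin 3) ℂ) (X 2) = X 2 - 1 :=
      eShift_X 2
    rw [e0, e1, e2]
  rw [h1, Ideal.map_pow]

/-- Low-order coefficients vanish on `⟨X₀,X₁,X₂⟩²`. -/
lemma low_vanish : ∀ q ∈ ((Ideal.span {(X 0 : MvPolynomial (Fin 3) ℂ), X 1, X 2}) ^ 2 :
    Ideal (MvPolynomial (Fin 3) ℂ)),
    MvPolynomial.eval (0 : Fin 3 → ℂ) q = 0 ∧
      ∀ i : Fin 3, MvPolynomial.eval (0 : Fin 3 → ℂ) (pderiv i q) = 0 := by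
  intro q hq
  rw [pow_two, Ideal.span_mul_span'] at hq
  induction hq using Submodule.span_induction with
  | mem x hx =>
      obtain ⟨a, ha, b, hb, rfl⟩ := hx
      simp only [Set.mem_insert_iff, Set.mem_singleton_iff] at ha hb
      constructor
      · rcases ha with rfl | rfl | rfl <;> rcases hb with rfl | rfl | rfl <;> simp
      · intro i
        rcases ha with rfl | rfl | rfl <;> rcases hb with rfl | rfl | rfl <;>
          simp [pderiv_mul]
  | zero => simp
  | add x y _ _ hx hy =>
      refine ⟨?_, fun i => ?_⟩
      · rw [map_add, hx.1, hy.1, add_zero]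
      · rw [map_add, map_add, hx.2 i, hy.2 i, add_zero]
  | smul r x _ hx =>
      constructor
      · rw [smul_eq_mul, map_mul, hx.1, mul_zero]
      · intro i
        rw [smul_eq_mul, pderiv_mul, map_add, map_mul, map_mul, hx.1, hx.2 i,
          mul_zero, mul_zero, add_zero]

lemma finrank_SZ : Module.finrank ℂ SquareZeroThreeVars = 4 := by
  classical
  set J : Ideal (MvPolynomial (Fin 3) ℂ) :=
    (Ideal.span {(X 0 : MvPolynomial (Fin 3) ℂ), X 1, X 2}) ^ 2 with hJ
  let mkJ := Ideal.Quotient.mk J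
  let b : Fin 4 → SquareZeroThreeVars := ![1, mkJ (X 0), mkJ (X 1), mkJ (X 2)]
  have hXmem : ∀ i : Fin 3, (X i : MvPolynomial (Fin 3) ℂ) ∈
      Ideal.span {(X 0 : MvPolynomial (Fin 3) ℂ), X 1, X 2} := by
    intro i
    fin_cases i
    · exact Ideal.subset_span (Set.mem_insert _ _)
    · exact Ideal.subset_span (Set.mem_insert_of_mem _ (Set.mem_insert _ _))
    · exact Ideal.subset_span (Set.mem_insert_of_mem _ (Set.mem_insert_of_mem _ (Set.mem_singleton _)))
  have hbmem : ∀ i : Fin 3, mkJ (X i) ∈ Submodule.span ℂ (Set.range b) := by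
    intro i
    fin_cases i
    · exact Submodule.subset_span ⟨1, rfl⟩
    · exact Submodule.subset_span ⟨2, rfl⟩
    · exact Submodule.subset_span ⟨3, rfl⟩
  have hclosed : ∀ i : Fin 3, ∀ z ∈ Submodule.span ℂ (Set.range b),
      z * mkJ (X i) ∈ Submodule.span ℂ (Set.range b) := by
    intro i z hz
    induction hz using Submodule.span_induction with
    | mem x hx =>
        obtain ⟨k, rfl⟩ := hx
        fin_cases k
        · simpa [b] using hbmem i
        · show b 1 * mkJ (X i) ∈ Submodule.span ℂ (Set.range b)
          have h1 : b 1 * mkJ (X i) = mkJ (X 0 * X i) := by simp [b, mkJ, map_mul]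
          rw [h1, Ideal.Quotient.eq_zero_iff_mem.mpr]
          · exact zero_mem _
          · rw [hJ, pow_two]; exact Ideal.mul_mem_mul (hXmem 0) (hXmem i)
        · show b 2 * mkJ (X i) ∈ Submodule.span ℂ (Set.range b)
          have h1 : b 2 * mkJ (X i) = mkJ (X 1 * X i) := by simp [b, mkJ, map_mul]
          rw [h1, Ideal.Quotient.eq_zero_iff_mem.mpr]
          · exact zero_mem _
          · rw [hJ, pow_two]; exact Ideal.mul_mem_mul (hXmem 1) (hXmem i)
        · show b 3 * mkJ (X i) ∈ Submodule.span ℂ (Set.range b)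
          have h1 : b 3 * mkJ (X i) = mkJ (X 2 * X i) := by simp [b, mkJ, map_mul]
          rw [h1, Ideal.Quotient.eq_zero_iff_mem.mpr]
          · exact zero_mem _
          · rw [hJ, pow_two]; exact Ideal.mul_mem_mul (hXmem 2) (hXmem i)
    | zero => simp
    | add x y _ _ hx hy => rw [add_mul]; exact add_mem hx hy
    | smul c x _ hx => rw [smul_mul_assoc]; exact Submodule.smul_mem _ _ hx
  have hspan : Submodule.span ℂ (Set.range b) = ⊤ := by
    rw [eq_top_iff]
    rintro z -
    obtain ⟨p, rfl⟩ := Ideal.Quotient.mk_surjective z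
    induction p using MvPolynomial.induction_on with
    | C a =>
        have hca : (Ideal.Quotient.mk J) (C a) = a • (1 : SquareZeroThreeVars) := by
          rw [show ((Ideal.Quotient.mk J) (C a) : SquareZeroThreeVars)
              = algebraMap ℂ SquareZeroThreeVars a from rfl,
            Algebra.algebraMap_eq_smul_one]
        rw [hca]
        exact Submodule.smul_mem _ _ (Submodule.subset_span ⟨0, rfl⟩)
    | add p q hp hq => rw [map_add]; exact add_mem hp hq
    | mul_X p i hp =>
        rw [map_mul]
        exact hclosed i _ hp
  have hind : LinearIndependent ℂ b := by
    rw [Fintype.linearIndependent_iff]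
    intro g hg
    have hCsmul : ∀ (c : ℂ) (z : MvPolynomial (Fin 3) ℂ),
        (Ideal.Quotient.mk J) (C c * z) = c • (Ideal.Quotient.mk J z) := by
      intro c z
      rw [map_mul, show ((Ideal.Quotient.mk J) (C c) : SquareZeroThreeVars)
          = algebraMap ℂ SquareZeroThreeVars c from rfl, ← Algebra.smul_def]
    have hpoly : (Ideal.Quotient.mk J)
        (C (g 0) * 1 + C (g 1) * X 0 + C (g 2) * X 1 + C (g 3) * X 2) = 0 := by
      rw [map_add, map_add, map_add, hCsmul, hCsmul, hCsmul, hCsmul, map_one, ← hg,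
        Fin.sum_univ_four]
      rfl
    have hmem : (C (g 0) * 1 + C (g 1) * X 0 + C (g 2) * X 1 + C (g 3) * X 2 :
        MvPolynomial (Fin 3) ℂ) ∈ J := Ideal.Quotient.eq_zero_iff_mem.mp hpoly
    obtain ⟨h0, hD⟩ := low_vanish _ hmem
    have e0 : g 0 = 0 := by simpa using h0
    have e1 : g 1 = 0 := by simpa [pderiv_mul] using hD 0
    have e2 : g 2 = 0 := by simpa [pderiv_mul] using hD 1
    have e3 : g 3 = 0 := by simpa [pderiv_mul] using hD 2
    intro i
    fin_cases i <;> assumption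
  let B : Module.Basis (Fin 4) ℂ SquareZeroThreeVars := Module.Basis.mk hind (by rw [hspan])
  rw [Module.finrank_eq_card_basis B, Fintype.card_fin]

theorem virtual_Ktheory_P13_HKRC :
    ∃ hm : augIdeal3.IsMaximal,
      letI := hm.isPrime
      Nonempty (Localization.AtPrime augIdeal3 ≃ₐ[ℂ] SquareZeroThreeVars) ∧
      Module.finrank ℂ (Localization.AtPrime augIdeal3) = 4 ∧
      IsLocalRing.maximalIdeal (Localization.AtPrime augIdeal3) ^ 2 = ⊥ := by
  classical
  -- the augmentation map
  have hI_ker : ∀ a ∈ virtIdeal3, ev1 a = 0 := by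
    intro a ha
    have : a ∈ RingHom.ker ev1 := by
      rw [← Mid_eq_ker]; exact I3_le_Mid ha
    rwa [RingHom.mem_ker] at this
  let ε : VirtK3 →+* ℂ := Ideal.Quotient.lift virtIdeal3 ev1 hI_ker
  have hε_mk : ∀ p, ε (Ideal.Quotient.mk virtIdeal3 p) = ev1 p := fun p =>
    Ideal.Quotient.lift_mk _ _ _
  have hε_surj : Function.Surjective ε := fun z =>
    ⟨Ideal.Quotient.mk virtIdeal3 (C z), by rw [hε_mk]; simp [ev1]⟩
  have hker : RingHom.ker ε = augIdeal3 := by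
    ext x
    obtain ⟨p, rfl⟩ := Ideal.Quotient.mk_surjective x
    rw [RingHom.mem_ker, hε_mk, mem_aug_iff, Mid_eq_ker, RingHom.mem_ker]
  have hmax : augIdeal3.IsMaximal := by
    rw [← hker]
    exact RingHom.ker_isMaximal_of_surjective ε hε_surj
  refine ⟨hmax, ?_⟩
  letI := hmax.isPrime
  -- the quotient R/Mid² as a model for the localization
  let φ : VirtK3 →ₐ[ℂ] (MvPolynomial (Fin 3) ℂ ⧸ (Mid ^ 2)) :=
    Ideal.Quotient.liftₐ virtIdeal3 (Ideal.Quotient.mkₐ ℂ (Mid ^ 2))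
      (fun a ha => Ideal.Quotient.eq_zero_iff_mem.mpr (I3_le_M2 ha))
  letI : Algebra VirtK3 (MvPolynomial (Fin 3) ℂ ⧸ (Mid ^ 2)) := φ.toRingHom.toAlgebra
  have hφ_mk : ∀ p, algebraMap VirtK3 (MvPolynomial (Fin 3) ℂ ⧸ (Mid ^ 2))
      (Ideal.Quotient.mk virtIdeal3 p) = Ideal.Quotient.mk (Mid ^ 2) p := fun p => rfl
  letI : IsScalarTower ℂ VirtK3 (MvPolynomial (Fin 3) ℂ ⧸ (Mid ^ 2)) :=
    IsScalarTower.of_algebraMap_eq' (φ.comp_algebraMap).symm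
  have hFc : Ideal.Quotient.mk virtIdeal3 Fpol ∈ augIdeal3.primeCompl := by
    intro hmem
    have hmem' : Ideal.Quotient.mk virtIdeal3 Fpol ∈ augIdeal3 := hmem
    rw [mem_aug_iff, Mid_eq_ker, RingHom.mem_ker, ev1_Fpol] at hmem'
    norm_num at hmem'
  haveI hLoc : IsLocalization augIdeal3.primeCompl
      (MvPolynomial (Fin 3) ℂ ⧸ (Mid ^ 2)) := by
    refine ⟨?_, ?_, ?_⟩
    · rintro ⟨y, hy⟩
      obtain ⟨p, rfl⟩ := Ideal.Quotient.mk_surjective y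
      rw [hφ_mk]
      refine isUnit_mkM2 p ?_
      intro h0
      exact hy ((mem_aug_iff p).mpr (by rw [Mid_eq_ker, RingHom.mem_ker]; exact h0))
    · intro z
      obtain ⟨p, rfl⟩ := Ideal.Quotient.mk_surjective z
      exact ⟨(Ideal.Quotient.mk virtIdeal3 p, 1), by
        rw [OneMemClass.coe_one, map_one, mul_one, hφ_mk]⟩
    · intro x y hxy
      obtain ⟨p, rfl⟩ := Ideal.Quotient.mk_surjective x
      obtain ⟨q, rfl⟩ := Ideal.Quotient.mk_surjective y
      rw [hφ_mk, hφ_mk, Ideal.Quotient.eq] at hxy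
      refine ⟨⟨Ideal.Quotient.mk virtIdeal3 Fpol, hFc⟩, ?_⟩
      show Ideal.Quotient.mk virtIdeal3 Fpol * Ideal.Quotient.mk virtIdeal3 p
        = Ideal.Quotient.mk virtIdeal3 Fpol * Ideal.Quotient.mk virtIdeal3 q
      rw [← map_mul, ← map_mul, Ideal.Quotient.eq]
      have h : Fpol * p - Fpol * q = Fpol * (p - q) := by ring
      rw [h]
      exact key_f _ hxy
  -- the algebra equivalences
  let eLQ : Localization.AtPrime augIdeal3 ≃ₐ[VirtK3]
      (MvPolynomial (Fin 3) ℂ ⧸ (Mid ^ 2)) :=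
    IsLocalization.algEquiv augIdeal3.primeCompl _ _
  let eSZ : SquareZeroThreeVars ≃ₐ[ℂ] (MvPolynomial (Fin 3) ℂ ⧸ (Mid ^ 2)) :=
    Ideal.quotientEquivAlg _ _ eShift map_eShift_sq
  let eFinal : Localization.AtPrime augIdeal3 ≃ₐ[ℂ] SquareZeroThreeVars :=
    (AlgEquiv.restrictScalars ℂ eLQ).trans eSZ.symm
  refine ⟨⟨eFinal⟩, ?_, ?_⟩
  · rw [eFinal.toLinearEquiv.finrank_eq]
    exact finrank_SZ
  · rw [← Localization.AtPrime.map_eq_maximalIdeal, ← Ideal.map_pow,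
      Ideal.map_eq_bot_iff_le_ker, pow_two, Ideal.mul_le]
    intro r hr s hs
    obtain ⟨p, rfl⟩ := Ideal.Quotient.mk_surjective r
    obtain ⟨q, rfl⟩ := Ideal.Quotient.mk_surjective s
    rw [mem_aug_iff] at hr hs
    rw [RingHom.mem_ker, ← map_mul,
      IsLocalization.map_eq_zero_iff augIdeal3.primeCompl]
    refine ⟨⟨Ideal.Quotient.mk virtIdeal3 Fpol, hFc⟩, ?_⟩
    show Ideal.Quotient.mk virtIdeal3 Fpol * Ideal.Quotient.mk virtIdeal3 (p * q) = 0
    rw [← map_mul, Ideal.Quotient.eq_zero_iff_mem]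
    exact key_f _ (prod_mem_sq hr hs)
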